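/- Define φ(G) = G / (E[G(p_S)] − κ) and φ'(Ḡ) = κ·Ḡ / (E[Ḡ(p_S)] − 1). In a nontrivial IA setting, G is feasible for the minimization program (convexity, E[G(p_S)] − κ ≥ G(p₀), limited liability) if and only if φ(G) is feasible for the maximization program (convexity, Ḡ(p₀) ≤ 1, E[Ḡ(p_S)] > 1, limited liability), and φ' is the inverse of φ on these feasible sets. -/

import Mathlib

open Finset

/-- Limited liability: at every point of the simplex `G` has a subtangent
(affine minorant touching `G` there) that is nonnegative at every vertex. -/
def LimitedLiability {Ω : Type*} [Fintype Ω] (G : (Ω → ℝ) → ℝ) : Prop :=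
  ∀ p ∈ stdSimplex ℝ Ω, ∃ (v : Ω → ℝ) (β : ℝ),
    ((∑ ω, v ω * p ω) + β = G p) ∧
    (∀ p' ∈ stdSimplex ℝ Ω, (∑ ω, v ω * p' ω) + β ≤ G p') ∧
    (∀ ω, 0 ≤ v ω + β)

/-- Expected value of `G` at the posterior. -/
def Esig {Ω S : Type*} [Fintype S] (q : S → ℝ) (ps : S → Ω → ℝ)
    (G : (Ω → ℝ) → ℝ) : ℝ :=
  ∑ σ, q σ * G (ps σ)

/-- Feasibility for the minimization program (P1). -/
def FeasMin {Ω S : Type*} [Fintype Ω] [Fintype S] (q : S → ℝ) (ps : S → Ω → ℝ)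
    (p₀ : Ω → ℝ) (κ : ℝ) (G : (Ω → ℝ) → ℝ) : Prop :=
  ConvexOn ℝ (stdSimplex ℝ Ω) G ∧ LimitedLiability G ∧
    Esig q ps G - κ ≥ G p₀

/-- Feasibility for the maximization program (P2). -/
def FeasMax {Ω S : Type*} [Fintype Ω] [Fintype S] (q : S → ℝ) (ps : S → Ω → ℝ)
    (p₀ : Ω → ℝ) (G : (Ω → ℝ) → ℝ) : Prop :=
  ConvexOn ℝ (stdSimplex ℝ Ω) G ∧ LimitedLiability G ∧
    G p₀ ≤ 1 ∧ 1 < Esig q ps G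

section Aux

variable {Ω S : Type*} [Fintype Ω] [Fintype S]

lemma affine_eval (v : Ω → ℝ) (β : ℝ) {p : Ω → ℝ} (hp : ∑ ω, p ω = 1) :
    (∑ ω, v ω * p ω) + β = ∑ ω, (v ω + β) * p ω := by
  simp only [add_mul, Finset.sum_add_distrib, ← Finset.mul_sum, hp, mul_one]

lemma LL_nonneg {G : (Ω → ℝ) → ℝ} (h : LimitedLiability G) :
    ∀ p ∈ stdSimplex ℝ Ω, 0 ≤ G p := by
  intro p hp
  obtain ⟨v, β, h1, _, h3⟩ := h p hp
  rw [← h1, affine_eval v β hp.2]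
  exact Finset.sum_nonneg fun ω _ => mul_nonneg (h3 ω) (hp.1 ω)

lemma LL_smul {G : (Ω → ℝ) → ℝ} {c : ℝ} (hc : 0 ≤ c) (h : LimitedLiability G) :
    LimitedLiability (fun p => c * G p) := by
  intro p hp
  obtain ⟨v, β, h1, h2, h3⟩ := h p hp
  refine ⟨fun ω => c * v ω, c * β, ?_, ?_, ?_⟩
  · dsimp only
    rw [← h1, mul_add, Finset.mul_sum]
    congr 1; exact Finset.sum_congr rfl fun ω _ => by ring
  · intro p' hp'
    have := mul_le_mul_of_nonneg_left (h2 p' hp') hc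
    rw [mul_add, Finset.mul_sum] at this
    calc (∑ ω, (c * v ω) * p' ω) + c * β
        = (∑ ω, c * (v ω * p' ω)) + c * β := by
          congr 1; exact Finset.sum_congr rfl fun ω _ => by ring
      _ ≤ c * G p' := this
  · intro ω
    have := mul_nonneg hc (h3 ω)
    rw [mul_add] at this; exact this

lemma Esig_smul (q : S → ℝ) (ps : S → Ω → ℝ) (G : (Ω → ℝ) → ℝ) (c : ℝ) :
    Esig q ps (fun p => c * G p) = c * Esig q ps G := by
  unfold Esig; rw [Finset.mul_sum]
  exact Finset.sum_congr rfl fun σ _ => by ring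

lemma Esig_div (q : S → ℝ) (ps : S → Ω → ℝ) (G : (Ω → ℝ) → ℝ) (c : ℝ) :
    Esig q ps (fun p => G p / c) = Esig q ps G / c := by
  unfold Esig; rw [Finset.sum_div]
  exact Finset.sum_congr rfl fun σ _ => by ring

lemma feasmin_pos (q : S → ℝ) (hq : q ∈ stdSimplex ℝ S)
    (ps : S → Ω → ℝ) (hps : ∀ σ, ps σ ∈ stdSimplex ℝ Ω)
    (p₀ : Ω → ℝ) (hp₀ : p₀ ∈ stdSimplex ℝ Ω)
    (hfull : ∀ ω, 0 < p₀ ω)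
    (κ : ℝ) (hκ : 0 < κ)
    (G : (Ω → ℝ) → ℝ) (hG : FeasMin q ps p₀ κ G) :
    0 < Esig q ps G - κ := by
  obtain ⟨hconv, hLL, hfeas⟩ := hG
  have hG0 : 0 ≤ G p₀ := LL_nonneg hLL p₀ hp₀
  by_contra hcon
  push_neg at hcon
  have hGp0 : G p₀ = 0 := le_antisymm (by linarith) hG0
  have hσ : ∀ σ, G (ps σ) = 0 := by
    intro σ
    obtain ⟨v, β, h1, h2, h3⟩ := hLL (ps σ) (hps σ)
    have hle : ∑ ω, (v ω + β) * p₀ ω ≤ 0 := by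
      rw [← affine_eval v β hp₀.2]
      have := h2 p₀ hp₀; linarith
    have hsum0 : ∑ ω, (v ω + β) * p₀ ω = 0 :=
      le_antisymm hle (Finset.sum_nonneg fun ω _ => mul_nonneg (h3 ω) (hp₀.1 ω))
    have hz : ∀ ω, v ω + β = 0 := by
      intro ω
      have hterm := (Finset.sum_eq_zero_iff_of_nonneg
        (fun ω _ => mul_nonneg (h3 ω) (hp₀.1 ω))).1 hsum0 ω (Finset.mem_univ ω)
      rcases mul_eq_zero.1 hterm with h | h
      · exact h
      · exact absurd h (ne_of_gt (hfull ω))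
    rw [← h1, affine_eval v β (hps σ).2]
    exact Finset.sum_eq_zero fun ω _ => by rw [hz ω, zero_mul]
  have : Esig q ps G = 0 := by
    unfold Esig; exact Finset.sum_eq_zero fun σ _ => by rw [hσ σ, mul_zero]
  linarith

end Aux

/-- In a nontrivial IA setting, `φ(G) = G / (E[G(p_S)] - κ)` maps feasible solutions of
the minimization program to feasible solutions of the maximization program,
`φ'(Ḡ) = κ Ḡ / (E[Ḡ(p_S)] - 1)` maps feasible solutions backwards, and `φ` and `φ'`
are mutually inverse on the feasible sets. -/
theorem feasibility_equivalence {Ω S : Type*} [Fintype Ω] [Nonempty Ω] [Fintype S]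
    (q : S → ℝ) (hq : q ∈ stdSimplex ℝ S)
    (ps : S → Ω → ℝ) (hps : ∀ σ, ps σ ∈ stdSimplex ℝ Ω)
    (p₀ : Ω → ℝ) (hprior : ∀ ω, p₀ ω = ∑ σ, q σ * ps σ ω)
    (hfull : ∀ ω, 0 < p₀ ω)
    (κ : ℝ) (hκ : 0 < κ)
    (hnontriv : ∃ σ, 0 < q σ ∧ ps σ ≠ p₀) :
    (∀ G : (Ω → ℝ) → ℝ, FeasMin q ps p₀ κ G →
      FeasMax q ps p₀ (fun p => G p / (Esig q ps G - κ))) ∧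
    (∀ Gbar : (Ω → ℝ) → ℝ, FeasMax q ps p₀ Gbar →
      FeasMin q ps p₀ κ (fun p => κ * Gbar p / (Esig q ps Gbar - 1))) ∧
    (∀ G : (Ω → ℝ) → ℝ, FeasMin q ps p₀ κ G →
      (fun p => κ * (G p / (Esig q ps G - κ)) /
        (Esig q ps (fun p' => G p' / (Esig q ps G - κ)) - 1)) = G) ∧
    (∀ Gbar : (Ω → ℝ) → ℝ, FeasMax q ps p₀ Gbar →
      (fun p => (κ * Gbar p / (Esig q ps Gbar - 1)) /
        (Esig q ps (fun p' => κ * Gbar p' / (Esig q ps Gbar - 1)) - κ)) = Gbar) := by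
  have hp₀ : p₀ ∈ stdSimplex ℝ Ω := by
    constructor
    · exact fun ω => (hfull ω).le
    · calc ∑ ω, p₀ ω = ∑ ω, ∑ σ, q σ * ps σ ω := by
            exact Finset.sum_congr rfl fun ω _ => hprior ω
        _ = ∑ σ, ∑ ω, q σ * ps σ ω := Finset.sum_comm
        _ = ∑ σ, q σ * ∑ ω, ps σ ω := by
            exact Finset.sum_congr rfl fun σ _ => (Finset.mul_sum _ _ _).symm
        _ = ∑ σ, q σ := by
            exact Finset.sum_congr rfl fun σ _ => by rw [(hps σ).2, mul_one]
        _ = 1 := hq.2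
  refine ⟨?_, ?_, ?_, ?_⟩
  · -- direction 1: FeasMin → FeasMax of φ(G)
    intro G hG
    have hc : 0 < Esig q ps G - κ := feasmin_pos q hq ps hps p₀ hp₀ hfull κ hκ G hG
    obtain ⟨hconv, hLL, hfeas⟩ := hG
    set c := Esig q ps G - κ with hcdef
    have hfun : (fun p => G p / c) = fun p => c⁻¹ * G p := by
      funext p; rw [div_eq_inv_mul]
    refine ⟨?_, ?_, ?_, ?_⟩
    · rw [hfun]
      simpa [smul_eq_mul] using hconv.smul (inv_nonneg.2 hc.le)
    · rw [hfun]; exact LL_smul (inv_nonneg.2 hc.le) hLL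
    · exact (div_le_one hc).2 hfeas
    · rw [Esig_div]
      rw [lt_div_iff₀ hc]
      linarith
  · -- direction 2: FeasMax → FeasMin of φ'(Gbar)
    intro Gbar hGbar
    obtain ⟨hconv, hLL, hle1, hgt1⟩ := hGbar
    have hD : 0 < Esig q ps Gbar - 1 := by linarith
    set D := Esig q ps Gbar - 1 with hDdef
    have hfun : (fun p => κ * Gbar p / D) = fun p => (κ / D) * Gbar p := by
      funext p; ring
    have hcd : 0 ≤ κ / D := (div_pos hκ hD).le
    refine ⟨?_, ?_, ?_⟩
    · rw [hfun]
      simpa [smul_eq_mul] using hconv.smul hcd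
    · rw [hfun]; exact LL_smul hcd hLL
    · rw [hfun, Esig_smul]
      have hE : Esig q ps Gbar = D + 1 := by rw [hDdef]; ring
      have hkey : κ / D * Esig q ps Gbar - κ = κ / D := by
        rw [hE]; field_simp; ring
      rw [ge_iff_le, hkey]
      calc κ / D * Gbar p₀ ≤ κ / D * 1 :=
            mul_le_mul_of_nonneg_left hle1 hcd
        _ = κ / D := mul_one _
  · -- φ' ∘ φ = id
    intro G hG
    have hc : 0 < Esig q ps G - κ := feasmin_pos q hq ps hps p₀ hp₀ hfull κ hκ G hG
    set c := Esig q ps G - κ with hcdef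
    funext p
    rw [Esig_div]
    have hE : Esig q ps G = c + κ := by rw [hcdef]; ring
    rw [hE]
    field_simp
    rw [show c + κ - c = κ from by ring]
    exact mul_div_cancel_left₀ _ hκ.ne'
  · -- φ ∘ φ' = id
    intro Gbar hGbar
    obtain ⟨_, _, _, hgt1⟩ := hGbar
    have hD : 0 < Esig q ps Gbar - 1 := by linarith
    set D := Esig q ps Gbar - 1 with hDdef
    funext p
    have hfun : (fun p' => κ * Gbar p' / D) = fun p' => (κ / D) * Gbar p' := by
      funext p'; ring
    rw [hfun, Esig_smul]
    have hE : Esig q ps Gbar = D + 1 := by rw [hDdef]; ring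
    rw [hE]
    have hκ' : κ ≠ 0 := hκ.ne'
    have hD' : D ≠ 0 := hD.ne'
    field_simp
    ring
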